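/- arXiv:2305.06785 — 4 statements merged into one kernel-verified Lean document; each statement's English description precedes it below -/
import Mathlib

section
/- Let a, z, LB, UB be real numbers with LB ≤ a ≤ UB. Then z = max(0, a) if and only if there exists σ ∈ {0,1} such that a ≤ z, z ≤ a − (1 − σ)·LB, z ≤ σ·UB, and z ≥ 0. (Correctness of the big-M mixed-integer encoding of a single ReLU neuron.) -/
/-- Correctness of the big-M mixed-integer encoding of a single ReLU neuron:
for valid pre-activation bounds `LB ≤ a ≤ UB`, `z = max 0 a` iff there is a
binary `σ` with `a ≤ z`, `z ≤ a - (1 - σ) * LB`, `z ≤ σ * UB` and `z ≥ 0`. -/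
theorem relu_bigM_correct (a z LB UB : ℝ) (hLB : LB ≤ a) (hUB : a ≤ UB) :
    z = max 0 a ↔
      ∃ σ : ℝ, (σ = 0 ∨ σ = 1) ∧
        a ≤ z ∧ z ≤ a - (1 - σ) * LB ∧ z ≤ σ * UB ∧ 0 ≤ z := by
  constructor
  · intro h
    rcases le_total a 0 with ha | ha
    · refine ⟨0, Or.inl rfl, ?_⟩
      have hz : z = 0 := by rw [h, max_eq_left ha]
      constructor
      · linarith [le_max_right (0:ℝ) a, h.symm.le]
      · constructor
        · rw [hz]; linarith
        · constructor <;> simp [hz]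
    · refine ⟨1, Or.inr rfl, ?_⟩
      have hz : z = a := by rw [h, max_eq_right ha]
      exact ⟨hz.ge, by rw [hz]; nlinarith, by rw [hz]; linarith, by linarith⟩
  · rintro ⟨σ, hσ01, h1, h2, h3, h4⟩
    rcases hσ01 with rfl | rfl
    · have : z ≤ 0 := by linarith
      have hz : z = 0 := le_antisymm this h4
      rw [hz, max_eq_left (by linarith)]
    · have : z ≤ a := by linarith
      have hz : z = a := le_antisymm this h1
      rw [hz, max_eq_right (by linarith)]
end

section
/- Let W be a real m×n matrix, b ∈ ℝ^m, x ∈ ℝ^n, and LB, UB ∈ ℝ^m be such that LB_i ≤ (Wx + b)_i ≤ UB_i for every i ∈ {1,…,m}. Then a vector z ∈ ℝ^m satisfies z_i = max(0, (Wx + b)_i) for all i if and only if there exists σ ∈ {0,1}^m such that for every i: (Wx + b)_i ≤ z_i, z_i ≤ (Wx + b)_i − (1 − σ_i)·LB_i, z_i ≤ σ_i·UB_i, and z_i ≥ 0. (Correctness of the componentwise big-M mixed-integer encoding of a fully connected ReLU layer.) -/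
open Matrix

/-- Correctness of the componentwise big-M mixed-integer encoding of a fully
connected ReLU layer `z = max(0, W x + b)` with valid pre-activation bounds
`LB_i ≤ (W x + b)_i ≤ UB_i`. -/
theorem relu_layer_bigM_correct (m n : ℕ) (W : Matrix (Fin m) (Fin n) ℝ)
    (b : Fin m → ℝ) (x : Fin n → ℝ) (LB UB : Fin m → ℝ)
    (hbounds : ∀ i, LB i ≤ (W.mulVec x + b) i ∧ (W.mulVec x + b) i ≤ UB i)
    (z : Fin m → ℝ) :
    (∀ i, z i = max 0 ((W.mulVec x + b) i)) ↔
      ∃ σ : Fin m → ℝ, ∀ i,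
        (σ i = 0 ∨ σ i = 1) ∧
        (W.mulVec x + b) i ≤ z i ∧
        z i ≤ (W.mulVec x + b) i - (1 - σ i) * LB i ∧
        z i ≤ σ i * UB i ∧ 0 ≤ z i := by
  set p := W.mulVec x + b with hp
  constructor
  · intro hz
    refine ⟨fun i => if 0 ≤ p i then 1 else 0, fun i => ?_⟩
    obtain ⟨hl, hu⟩ := hbounds i
    by_cases h : 0 ≤ p i
    · have hz' : z i = p i := by rw [hz i, max_eq_right h]
      refine ⟨Or.inr (if_pos h), ?_, ?_, ?_, ?_⟩ <;> simp [if_pos h, hz'] <;> linarith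
    · have hz' : z i = 0 := by rw [hz i, max_eq_left (le_of_not_ge h)]
      refine ⟨Or.inl (if_neg h), ?_, ?_, ?_, ?_⟩ <;> simp [if_neg h, hz'] <;> linarith
  · rintro ⟨σ, hσ⟩ i
    obtain ⟨hs, h1, h2, h3, h4⟩ := hσ i
    obtain ⟨hl, hu⟩ := hbounds i
    rcases hs with hs | hs
    · rw [hs] at h2 h3
      have : z i = 0 := le_antisymm (by linarith) h4
      rw [this]
      symm; apply max_eq_left; linarith
    · rw [hs] at h2 h3
      have : z i = p i := le_antisymm (by linarith) h1
      rw [this]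
      symm; apply max_eq_right; linarith
end

section
/- Let L ≥ 2, and for l = 1,…,L−1 let W^l be a real n_{l+1}×n_l matrix and b^l ∈ ℝ^{n_{l+1}}. Define the ReLU network f : ℝ^{n_1} → ℝ^{n_L} by the recursion x^{l+1} = max(0, W^l x^l + b^l) componentwise for l = 1,…,L−2 and x^L = W^{L−1} x^{L−1} + b^{L−1}. Fix an input x^1 ∈ ℝ^{n_1}, and suppose that for each hidden layer l = 1,…,L−2 the bounds LB^{l+1}, UB^{l+1} ∈ ℝ^{n_{l+1}} satisfy LB^{l+1}_i ≤ (W^l x^l + b^l)_i ≤ UB^{l+1}_i along the network trajectory of x^1. Then vectors x^2,…,x^L satisfy the big-M constraints for some binary vectors σ^2,…,σ^{L−1} (i.e., for each hidden layer l: W^l x^l + b^l ≤ x^{l+1}, W^l x^l + b^l − diag(LB^{l+1})(𝟏 − σ^{l+1}) ≥ x^{l+1}, x^{l+1} ≤ diag(UB^{l+1})σ^{l+1}, x^{l+1} ≥ 0, σ^{l+1} ∈ {0,1}^{n_{l+1}}; and x^L = W^{L−1} x^{L−1} + b^{L−1}) if and only if x^{l+1} equals the layer output of the network at input x^1 for each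 l, and in particular x^L = f(x^1). (The mixed-integer encoding of a ReLU network with valid bounds represents exactly the graph of the network.) -/
open Matrix

/-- The trajectory of the hidden (ReLU) layers of a feedforward network:
`reluTraj n W b x1 0 = x1` and
`reluTraj n W b x1 (l+1) = max (0, W^l (reluTraj n W b x1 l) + b^l)` componentwise.
(Layers are indexed from `0`, so paper layer `l ∈ {1,…,L}` is index `l-1`.) -/
def reluTraj (n : ℕ → ℕ) (W : ∀ l : ℕ, Matrix (Fin (n (l + 1))) (Fin (n l)) ℝ)
    (b : ∀ l : ℕ, Fin (n (l + 1)) → ℝ) (x1 : Fin (n 0) → ℝ) :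
    ∀ l : ℕ, Fin (n l) → ℝ
  | 0 => x1
  | (l + 1) => fun i => max 0 (((W l).mulVec (reluTraj n W b x1 l) + b l) i)

/-- The big-M mixed-integer encoding of a ReLU network (hidden ReLU layers for
`l = 0,…,L-3` and a final affine layer), with pre-activation bounds that are valid
along the network trajectory of the input `x1`, represents exactly the graph of the
network: vectors `xs 1, …, xs (L-1)` satisfy the big-M constraints for some binary
vectors `σ` iff each `xs (l+1)` equals the corresponding layer output of the network
at input `x1`; in particular the last variable equals the network output `f x1`.
(0-indexed: the output layer is `xs (L-2+1) = xs (L-1)`.) -/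
theorem relu_network_bigM_graph (L : ℕ) (hL : 2 ≤ L) (n : ℕ → ℕ)
    (W : ∀ l : ℕ, Matrix (Fin (n (l + 1))) (Fin (n l)) ℝ)
    (b : ∀ l : ℕ, Fin (n (l + 1)) → ℝ)
    (x1 : Fin (n 0) → ℝ) (LB UB : ∀ l : ℕ, Fin (n (l + 1)) → ℝ)
    (hbounds : ∀ l, l < L - 2 → ∀ i,
      LB l i ≤ ((W l).mulVec (reluTraj n W b x1 l) + b l) i ∧
      ((W l).mulVec (reluTraj n W b x1 l) + b l) i ≤ UB l i)
    (xs : ∀ l : ℕ, Fin (n l) → ℝ) (hx1 : xs 0 = x1) :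
    ((∃ σ : ∀ l : ℕ, Fin (n (l + 1)) → ℝ,
        ∀ l, l < L - 2 → ∀ i,
          (σ l i = 0 ∨ σ l i = 1) ∧
          ((W l).mulVec (xs l) + b l) i ≤ xs (l + 1) i ∧
          xs (l + 1) i ≤ ((W l).mulVec (xs l) + b l) i - (1 - σ l i) * LB l i ∧
          xs (l + 1) i ≤ σ l i * UB l i ∧ 0 ≤ xs (l + 1) i) ∧
      xs (L - 2 + 1) = (W (L - 2)).mulVec (xs (L - 2)) + b (L - 2)) ↔
    ((∀ l, l ≤ L - 2 → xs l = reluTraj n W b x1 l) ∧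
      xs (L - 2 + 1) =
        (W (L - 2)).mulVec (reluTraj n W b x1 (L - 2)) + b (L - 2)) := by
  constructor
  · rintro ⟨⟨σ, hσ⟩, hfin⟩
    have key : ∀ l, l ≤ L - 2 → xs l = reluTraj n W b x1 l := by
      intro l
      induction l with
      | zero => intro _; exact hx1
      | succ l ih =>
        intro hl1
        have hl : l < L - 2 := lt_of_lt_of_le (Nat.lt_succ_self l) hl1
        have hxl := ih (le_of_lt hl)
        funext i
        obtain ⟨hbin, h1, h2, h3, h4⟩ := hσ l hl i
        show xs (l + 1) i = max 0 (((W l).mulVec (reluTraj n W b x1 l) + b l) i)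
        rw [← hxl]
        rcases hbin with h0 | h1'
        · rw [h0] at h3
          simp at h3
          have hx0 : xs (l + 1) i = 0 := le_antisymm h3 h4
          rw [hx0]
          have : ((W l).mulVec (xs l) + b l) i ≤ 0 := hx0 ▸ h1
          exact (max_eq_left this).symm
        · rw [h1'] at h2
          simp at h2
          have : xs (l + 1) i = ((W l).mulVec (xs l) + b l) i := le_antisymm h2 h1
          rw [this]
          exact (max_eq_right (this ▸ h4)).symm
    refine ⟨key, ?_⟩
    rw [hfin, key (L - 2) le_rfl]
  · rintro ⟨key, hfin⟩
    refine ⟨⟨fun l i => if ((W l).mulVec (reluTraj n W b x1 l) + b l) i ≤ 0 then 0 else 1,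
      ?_⟩, by rw [hfin, key (L - 2) le_rfl]⟩
    intro l hl i
    have hxl := key l (le_of_lt hl)
    have hxl1 := key (l + 1) (Nat.succ_le_of_lt hl)
    have hval : xs (l + 1) i = max 0 (((W l).mulVec (reluTraj n W b x1 l) + b l) i) := by
      rw [hxl1]; rfl
    obtain ⟨hLB, hUB⟩ := hbounds l hl i
    rw [hxl, hval]
    set v := ((W l).mulVec (reluTraj n W b x1 l) + b l) i with hv
    by_cases hv0 : v ≤ 0
    · simp only [if_pos (show ((W l).mulVec (reluTraj n W b x1 l) + b l) i ≤ 0 from hv0)]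
      refine ⟨Or.inl trivial, le_max_right _ _, ?_, ?_, le_max_left _ _⟩
      · rw [max_eq_left hv0]; linarith
      · rw [max_eq_left hv0]; simp
    · simp only [if_neg (show ¬ ((W l).mulVec (reluTraj n W b x1 l) + b l) i ≤ 0 from hv0)]
      push_neg at hv0
      rw [max_eq_right (le_of_lt hv0)]
      refine ⟨Or.inr trivial, le_refl _, by simp, by simpa using hUB, le_of_lt hv0⟩
end

section
/- Let X ⊆ ℝ^{n_1} be nonempty and compact, let G : ℝ^{n_1} → ℝ be continuous, and let f : ℝ^{n_1} → ℝ be a feedforward ReLU network with a scalar affine output layer (f is defined by x^{l+1} = max(0, W^l x^l + b^l) componentwise for l = 1,…,L−2 and f(x^1) = W^{L−1} x^{L−1} + b^{L−1} ∈ ℝ). Suppose the pre-activation bounds LB^{l+1}, UB^{l+1} are valid along the network trajectory of every x^1 ∈ X. Then the optimal value of the surrogate mixed-integer program — minimize G(x^1) + x^L over all x^1 ∈ X, hidden-layer variables x^2,…,x^{L−1} ≥ 0, output x^L ∈ ℝ, and binaries σ satisfying the big-M constraints of every layer — equals min_{x ∈ X} (G(x) + f(x)), and this minimum is attained at some x*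 ∈ X. -/
open Matrix

lemma reluTraj_continuous (n : ℕ → ℕ) (W : ∀ l : ℕ, Matrix (Fin (n (l + 1))) (Fin (n l)) ℝ)
    (b : ∀ l : ℕ, Fin (n (l + 1)) → ℝ) (l : ℕ) :
    Continuous (fun x : Fin (n 0) → ℝ => reluTraj n W b x l) := by
  induction l with
  | zero => exact continuous_id
  | succ l ih =>
    apply continuous_pi
    intro i
    apply continuous_const.max
    simp only [Matrix.mulVec, dotProduct, Pi.add_apply]
    exact (continuous_finset_sum _ fun j _ =>
      continuous_const.mul ((continuous_apply j).comp ih)).add continuous_const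

/-- Feasible MIP variables coincide with the network trajectory. -/
lemma feasible_eq_traj (L : ℕ) (n : ℕ → ℕ)
    (W : ∀ l : ℕ, Matrix (Fin (l + 1 |> n)) (Fin (n l)) ℝ)
    (b : ∀ l : ℕ, Fin (n (l + 1)) → ℝ)
    (LB UB : ∀ l : ℕ, Fin (n (l + 1)) → ℝ)
    (xs : ∀ l : ℕ, Fin (n l) → ℝ) (σ : ∀ l : ℕ, Fin (n (l + 1)) → ℝ)
    (hcons : ∀ l, l < L - 2 → ∀ i,
      (σ l i = 0 ∨ σ l i = 1) ∧
      ((W l).mulVec (xs l) + b l) i ≤ xs (l + 1) i ∧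
      xs (l + 1) i ≤ ((W l).mulVec (xs l) + b l) i - (1 - σ l i) * LB l i ∧
      xs (l + 1) i ≤ σ l i * UB l i ∧ 0 ≤ xs (l + 1) i) :
    ∀ l, l ≤ L - 2 → xs l = reluTraj n W b (xs 0) l := by
  intro l
  induction l with
  | zero => intro _; rfl
  | succ l ih =>
    intro hl
    have hl' : l < L - 2 := Nat.lt_of_succ_le hl
    have hxs : xs l = reluTraj n W b (xs 0) l := ih hl'.le
    funext i
    obtain ⟨hσ, h1, h2, h3, h4⟩ := hcons l hl' i
    have : reluTraj n W b (xs 0) (l + 1) i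
        = max 0 (((W l).mulVec (xs l) + b l) i) := by
      rw [hxs]; rfl
    rw [this]
    rcases hσ with h0 | h0
    · rw [h0] at h2 h3
      simp only [zero_mul] at h3
      have hx0 : xs (l + 1) i = 0 := le_antisymm h3 h4
      rw [hx0]
      have : ((W l).mulVec (xs l) + b l) i ≤ 0 := h1.trans_eq hx0
      exact (max_eq_left this).symm
    · rw [h0] at h2
      simp only [sub_self, zero_mul, sub_zero] at h2
      have hx : xs (l + 1) i = ((W l).mulVec (xs l) + b l) i := le_antisymm h2 h1
      have : (0 : ℝ) ≤ ((W l).mulVec (xs l) + b l) i := hx ▸ h4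
      rw [hx, max_eq_right this]

/-- Let `X` be nonempty and compact, `G` continuous, and `f` a feedforward ReLU
network with a scalar affine output layer `f x = wout ⬝ᵥ (last hidden layer) + bout`,
whose pre-activation bounds are valid along the trajectory of every `x ∈ X`.
Then the optimal value of the surrogate MIP — minimize `G (xs 0) + x^L` over
`xs 0 ∈ X`, hidden-layer variables and binaries satisfying the big-M constraints of
every layer — equals `min_{x ∈ X} (G x + f x)`, attained at some `xstar ∈ X`. -/
theorem surrogate_mip_value (L : ℕ) (hL : 2 ≤ L) (n : ℕ → ℕ)
    (W : ∀ l : ℕ, Matrix (Fin (n (l + 1))) (Fin (n l)) ℝ)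
    (b : ∀ l : ℕ, Fin (n (l + 1)) → ℝ)
    (wout : Fin (n (L - 2)) → ℝ) (bout : ℝ)
    (X : Set (Fin (n 0) → ℝ)) (hXne : X.Nonempty) (hXcomp : IsCompact X)
    (G : (Fin (n 0) → ℝ) → ℝ) (hG : Continuous G)
    (LB UB : ∀ l : ℕ, Fin (n (l + 1)) → ℝ)
    (hbounds : ∀ x ∈ X, ∀ l, l < L - 2 → ∀ i,
      LB l i ≤ ((W l).mulVec (reluTraj n W b x l) + b l) i ∧
      ((W l).mulVec (reluTraj n W b x l) + b l) i ≤ UB l i) :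
    ∃ xstar ∈ X,
      IsLeast
        {v : ℝ | ∃ xs : ∀ l : ℕ, Fin (n l) → ℝ, ∃ σ : ∀ l : ℕ, Fin (n (l + 1)) → ℝ,
          xs 0 ∈ X ∧
          (∀ l, l < L - 2 → ∀ i,
            (σ l i = 0 ∨ σ l i = 1) ∧
            ((W l).mulVec (xs l) + b l) i ≤ xs (l + 1) i ∧
            xs (l + 1) i ≤ ((W l).mulVec (xs l) + b l) i - (1 - σ l i) * LB l i ∧
            xs (l + 1) i ≤ σ l i * UB l i ∧ 0 ≤ xs (l + 1) i) ∧
          v = G (xs 0) + (wout ⬝ᵥ xs (L - 2) + bout)}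
        (G xstar + (wout ⬝ᵥ reluTraj n W b xstar (L - 2) + bout)) ∧
      ∀ x ∈ X,
        G xstar + (wout ⬝ᵥ reluTraj n W b xstar (L - 2) + bout) ≤
          G x + (wout ⬝ᵥ reluTraj n W b x (L - 2) + bout) := by
  set h : (Fin (n 0) → ℝ) → ℝ :=
    fun x => G x + (wout ⬝ᵥ reluTraj n W b x (L - 2) + bout) with hh
  have hcont : Continuous h := by
    apply hG.add
    apply Continuous.add _ continuous_const
    simp only [dotProduct]
    exact continuous_finset_sum _ fun j _ =>
      continuous_const.mul ((continuous_apply j).comp (reluTraj_continuous n W b (L - 2)))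
  obtain ⟨xstar, hxstarX, hmin⟩ := hXcomp.exists_isMinOn hXne hcont.continuousOn
  refine ⟨xstar, hxstarX, ⟨⟨?_, ?_⟩, fun x hx => hmin hx⟩⟩
  · -- membership : the trajectory of xstar is feasible
    refine ⟨reluTraj n W b xstar, fun l i =>
      if 0 ≤ ((W l).mulVec (reluTraj n W b xstar l) + b l) i then 1 else 0,
      hxstarX, ?_, rfl⟩
    intro l hl i
    have hb := hbounds xstar hxstarX l hl i
    have htraj : reluTraj n W b xstar (l + 1) i
        = max 0 (((W l).mulVec (reluTraj n W b xstar l) + b l) i) := rfl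
    by_cases hp : 0 ≤ ((W l).mulVec (reluTraj n W b xstar l) + b l) i
    · simp only [if_pos hp]
      refine ⟨Or.inr (by simp), ?_, ?_, ?_, ?_⟩
      · rw [htraj]; exact le_max_right _ _
      · rw [htraj, max_eq_right hp]; simp
      · rw [htraj, max_eq_right hp, one_mul]; exact hb.2
      · rw [htraj]; exact le_max_left _ _
    · simp only [if_neg hp]
      have hneg : ((W l).mulVec (reluTraj n W b xstar l) + b l) i ≤ 0 := le_of_not_ge hp
      have hmax0 : reluTraj n W b xstar (l + 1) i = 0 := by
        rw [htraj, max_eq_left hneg]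
      refine ⟨Or.inl (by simp), ?_, ?_, ?_, ?_⟩
      · rw [hmax0]; exact hneg
      · rw [hmax0]; simp only [sub_zero, one_mul]
        linarith [hb.1]
      · rw [hmax0, zero_mul]
      · rw [hmax0]
  · -- lower bound
    rintro v ⟨xs, σ, hxs0, hcons, rfl⟩
    have heq := feasible_eq_traj L n W b LB UB xs σ hcons (L - 2) le_rfl
    rw [heq]
    exact hmin hxs0
end
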